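/- Let n ≥ 1, let F, G be coprime completely reducible homogeneous polynomials of the same degree d ≥ 1 in R = MvPolynomial (Fin (n+1)) ℂ, let P_1 = F, P_2 = G, P_3, …, P_k be pairwise distinct completely reducible members of the pencil 𝒫 with product Q̃ and radical Q, and let a_i = (Q/Q̃)·(F·∂_iG − G·∂_iF) and D = det(∂_j a_i)_{0≤i,j≤n}. Then Q^{n−1} divides D. -/

import Mathlib

open MvPolynomial

noncomputable section

/-- A linear form: a nonzero homogeneous polynomial of degree 1. -/
def IsLinearForm (n : ℕ) (α : MvPolynomial (Fin (n + 1)) ℂ) : Prop :=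
  α ≠ 0 ∧ α.IsHomogeneous 1

/-- A completely reducible polynomial: a product of linear forms. -/
def CompletelyReducible (n : ℕ) (P : MvPolynomial (Fin (n + 1)) ℂ) : Prop :=
  ∃ s : Multiset (MvPolynomial (Fin (n + 1)) ℂ),
    (∀ α ∈ s, IsLinearForm n α) ∧ P = s.prod

/-- F and G have no common non-unit factor. -/
def RelPrime (n : ℕ) (F G : MvPolynomial (Fin (n + 1)) ℂ) : Prop :=
  ∀ p : MvPolynomial (Fin (n + 1)) ℂ, p ∣ F → p ∣ G → IsUnit p

/-- The generic fiber of the pencil generated by F and G is irreducible. -/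
def GenericFiberIrreducible (n : ℕ) (F G : MvPolynomial (Fin (n + 1)) ℂ) : Prop :=
  {c : ℂ | ¬ Irreducible (F + C c * G)}.Finite

/-! ### Auxiliary lemmas -/

theorem det_aux {R : Type*} [CommRing R] {N : ℕ} (v u b cc : Fin N → R) (A : R)
    (Nm : Fin N → Fin N → R) :
    A ^ (N - 2) ∣ (Matrix.of fun i j => v i * u j + b i * cc j + A * Nm i j).det := by
  classical
  have hdet :
      (Matrix.of fun i j => v i * u j + b i * cc j + A * Nm i j).det =
        Matrix.detRowAlternating (Matrix.of fun i j => v i * u j + b i * cc j + A * Nm i j) := rfl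
  rw [hdet]
  set s : Fin N → Fin 3 → R := fun i t => if t = 0 then v i else if t = 1 then b i else A with hs
  set h : Fin N → Fin 3 → (Fin N → R) := fun i t =>
    if t = 0 then u else if t = 1 then cc else Nm i with hh
  have hrow : (Matrix.of fun i j => v i * u j + b i * cc j + A * Nm i j) =
      fun i => ∑ t : Fin 3, s i t • h i t := by
    funext i j
    simp [hs, hh, Fin.sum_univ_three, Matrix.of_apply, smul_eq_mul]
  rw [hrow]
  rw [← AlternatingMap.coe_multilinearMap, MultilinearMap.map_sum]
  apply Finset.dvd_sum
  intro r _
  have hterm : (Matrix.detRowAlternating (R := R) (n := Fin N)).toMultilinearMap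
        (fun i => s i (r i) • h i (r i)) =
      (∏ i, s i (r i)) * (Matrix.detRowAlternating (R := R) (n := Fin N)).toMultilinearMap
        (fun i => h i (r i)) := by
    rw [MultilinearMap.map_smul_univ]; rfl
  rw [hterm]
  by_cases h0 : ∃ i j : Fin N, i ≠ j ∧ r i = 0 ∧ r j = 0
  · obtain ⟨i, j, hij, hri, hrj⟩ := h0
    have : (Matrix.detRowAlternating (R := R) (n := Fin N)).toMultilinearMap
        (fun i => h i (r i)) = 0 := by
      apply (Matrix.detRowAlternating (R := R) (n := Fin N)).map_eq_zero_of_eq _ _ hij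
      simp [hh, hri, hrj]
    rw [this, mul_zero]
    exact dvd_zero _
  · by_cases h1 : ∃ i j : Fin N, i ≠ j ∧ r i = 1 ∧ r j = 1
    · obtain ⟨i, j, hij, hri, hrj⟩ := h1
      have : (Matrix.detRowAlternating (R := R) (n := Fin N)).toMultilinearMap
          (fun i => h i (r i)) = 0 := by
        apply (Matrix.detRowAlternating (R := R) (n := Fin N)).map_eq_zero_of_eq _ _ hij
        simp [hh, hri, hrj]
      rw [this, mul_zero]
      exact dvd_zero _
    · apply Dvd.dvd.mul_right
      set T : Finset (Fin N) := Finset.univ.filter (fun i => r i = 2) with hT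
      have hcard0 : (Finset.univ.filter (fun i => r i = 0)).card ≤ 1 := by
        apply Finset.card_le_one.2
        intro i hi j hj
        by_contra hne
        exact h0 ⟨i, j, hne, (Finset.mem_filter.1 hi).2, (Finset.mem_filter.1 hj).2⟩
      have hcard1 : (Finset.univ.filter (fun i => r i = 1)).card ≤ 1 := by
        apply Finset.card_le_one.2
        intro i hi j hj
        by_contra hne
        exact h1 ⟨i, j, hne, (Finset.mem_filter.1 hi).2, (Finset.mem_filter.1 hj).2⟩
      have hsub : Finset.univ ⊆ T ∪ (Finset.univ.filter (fun i => r i = 0)) ∪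
          (Finset.univ.filter (fun i => r i = 1)) := by
        intro i _
        simp only [Finset.mem_union, hT, Finset.mem_filter, Finset.mem_univ, true_and]
        omega
      have hcardT : N - 2 ≤ T.card := by
        have := Finset.card_le_card hsub
        have hu := Finset.card_union_le (T ∪ (Finset.univ.filter (fun i => r i = 0)))
          (Finset.univ.filter (fun i => r i = 1))
        have hu2 := Finset.card_union_le T (Finset.univ.filter (fun i => r i = 0))
        simp only [Finset.card_univ, Fintype.card_fin] at this
        omega
      have hTprod : ∏ i ∈ T, s i (r i) = A ^ T.card := by
        rw [Finset.prod_congr rfl (fun i hi => ?_), Finset.prod_const]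
        have : r i = 2 := (Finset.mem_filter.1 hi).2
        simp [hs, this]
      calc A ^ (N - 2) ∣ A ^ T.card := pow_dvd_pow A hcardT
        _ ∣ ∏ i, s i (r i) := by
            rw [← hTprod, ← Finset.prod_filter_mul_prod_filter_not Finset.univ (fun i => r i = 2)]
            exact dvd_mul_right _ _

theorem prod_pow_dvd_aux {R : Type*} [CommRing R] [IsDomain R] {ι : Type*}
    (s : Finset ι) (p : ι → R) (hprime : ∀ i ∈ s, Prime (p i))
    (hnd : ∀ i ∈ s, ∀ j ∈ s, i ≠ j → ¬ p i ∣ p j) (e : ℕ) (D : R)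
    (h : ∀ i ∈ s, p i ^ e ∣ D) : (∏ i ∈ s, p i ^ e) ∣ D := by
  classical
  induction s using Finset.induction with
  | empty => simp
  | insert _ _ hi ih =>
    rename_i i s
    obtain ⟨D', rfl⟩ := ih (fun j hj => hprime j (Finset.mem_insert_of_mem hj))
      (fun j hj k hk hjk => hnd j (Finset.mem_insert_of_mem hj) k (Finset.mem_insert_of_mem hk) hjk)
      (fun j hj => h j (Finset.mem_insert_of_mem hj))
    rw [Finset.prod_insert hi]
    have hpi := hprime i (Finset.mem_insert_self i s)
    have hnotdvd : ¬ p i ∣ ∏ j ∈ s, p j ^ e := by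
      intro hd
      obtain ⟨j, hj, hdj⟩ := hpi.exists_mem_finset_dvd hd
      have hij : i ≠ j := by rintro rfl; exact hi hj
      exact hnd i (Finset.mem_insert_self i s) j (Finset.mem_insert_of_mem hj) hij
        (hpi.dvd_of_dvd_pow hdj)
    have := hpi.pow_dvd_of_dvd_mul_left e hnotdvd (h i (Finset.mem_insert_self i s))
    obtain ⟨E, rfl⟩ := this
    exact ⟨E, by ring⟩

theorem degree_one_eq_single {σ : Type*} (d : σ →₀ ℕ) (hd : d.degree = 1) :
    ∃ i, d = Finsupp.single i 1 := by
  classical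
  have hne : d.support.Nonempty := by
    rw [Finset.nonempty_iff_ne_empty]
    intro h
    rw [Finsupp.degree_apply, h, Finset.sum_empty] at hd
    exact one_ne_zero hd.symm
  obtain ⟨i, hi⟩ := hne
  have hdi : d i ≤ 1 := hd ▸ Finsupp.le_degree i d
  have hdi1 : d i = 1 := le_antisymm hdi (Nat.one_le_iff_ne_zero.2 (Finsupp.mem_support_iff.1 hi))
  refine ⟨i, ?_⟩
  ext j
  rcases eq_or_ne j i with rfl | hj
  · simp [hdi1]
  · rw [Finsupp.single_apply, if_neg (Ne.symm hj)]
    by_contra hdj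
    have hjs : j ∈ d.support := Finsupp.mem_support_iff.2 hdj
    have hsub : {i, j} ⊆ d.support := by
      intro x hx
      rcases Finset.mem_insert.1 hx with rfl | hx
      · exact hi
      · rwa [Finset.mem_singleton.1 hx]
    have := Finset.sum_le_sum_of_subset (f := d) hsub
    rw [Finset.sum_insert (by simpa using Ne.symm hj), Finset.sum_singleton] at this
    rw [Finsupp.degree_apply] at hd
    omega

theorem degree_single_one {σ : Type*} (i : σ) : (Finsupp.single i 1 : σ →₀ ℕ).degree = 1 := by
  classical
  rw [Finsupp.degree_apply, Finsupp.support_single_ne_zero _ one_ne_zero, Finset.sum_singleton,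
    Finsupp.single_eq_same]

theorem linear_structure {n : ℕ} (p : MvPolynomial (Fin (n + 1)) ℂ) (hp : p.IsHomogeneous 1) :
    p = ∑ i, C (p.coeff (Finsupp.single i 1)) * X i := by
  classical
  apply MvPolynomial.ext
  intro d
  rw [MvPolynomial.coeff_sum]
  simp only [coeff_C_mul, coeff_X']
  by_cases h1 : d.degree = 1
  · obtain ⟨i, rfl⟩ := degree_one_eq_single d h1
    rw [Finset.sum_eq_single i]
    · simp
    · intro j _ hj
      rw [if_neg, mul_zero]
      intro hc
      exact hj (Finsupp.single_left_injective one_ne_zero hc)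
    · simp
  · rw [hp.coeff_eq_zero h1]
    symm
    apply Finset.sum_eq_zero
    intro i _
    rw [if_neg, mul_zero]
    intro hc
    exact h1 (hc ▸ degree_single_one i)

theorem pderiv_linear {n : ℕ} (p : MvPolynomial (Fin (n + 1)) ℂ) (hp : p.IsHomogeneous 1)
    (j : Fin (n + 1)) : pderiv j p = C (p.coeff (Finsupp.single j 1)) := by
  classical
  conv_lhs => rw [linear_structure p hp]
  rw [map_sum]
  rw [Finset.sum_eq_single j]
  · rw [pderiv_C_mul, pderiv_X_self, mul_one]
  · intro i _ hij
    rw [pderiv_C_mul, pderiv_X_of_ne hij, mul_zero]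
  · simp

theorem homog_linear_comb {n : ℕ} (s : Finset (Fin (n + 1))) (cc : Fin (n + 1) → ℂ) :
    (∑ i ∈ s, C (cc i) * X i : MvPolynomial (Fin (n + 1)) ℂ).IsHomogeneous 1 := by
  apply MvPolynomial.IsHomogeneous.sum
  intro i _
  simpa using (isHomogeneous_C _ (cc i)).mul (isHomogeneous_X ℂ i)

theorem prime_X_mv {n : ℕ} (i : Fin (n + 1)) : Prime (X i : MvPolynomial (Fin (n + 1)) ℂ) := by
  have h0 : Prime (X (0 : Fin (n + 1)) : MvPolynomial (Fin (n + 1)) ℂ) := by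
    rw [← MulEquiv.prime_iff (MvPolynomial.finSuccEquiv ℂ n).toMulEquiv]
    have : (MvPolynomial.finSuccEquiv ℂ n).toMulEquiv (X 0) = Polynomial.X :=
      finSuccEquiv_X_zero
    rw [this]
    exact Polynomial.prime_X
  have : (X i : MvPolynomial (Fin (n + 1)) ℂ) =
      (renameEquiv ℂ (Equiv.swap (0 : Fin (n + 1)) i)).toMulEquiv (X 0) := by
    simp [renameEquiv, rename_X]
  rw [this]
  exact (MulEquiv.prime_iff (renameEquiv ℂ (Equiv.swap (0 : Fin (n + 1)) i)).toMulEquiv).mpr h0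

theorem exists_linear_aut {n : ℕ} (γ : Fin (n + 1) → ℂ) (i0 : Fin (n + 1)) (h0 : γ i0 ≠ 0) :
    ∃ e : MvPolynomial (Fin (n + 1)) ℂ ≃ₐ[ℂ] MvPolynomial (Fin (n + 1)) ℂ,
      e (X i0) = ∑ i, C (γ i) * X i ∧
      (e.symm (X i0)).IsHomogeneous 1 ∧
      (∀ i, i ≠ i0 → e.symm (X i) = X i) := by
  classical
  set α : MvPolynomial (Fin (n + 1)) ℂ := ∑ i, C (γ i) * X i with hα
  set β : MvPolynomial (Fin (n + 1)) ℂ :=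
    C (γ i0)⁻¹ * (X i0 - ∑ i ∈ Finset.univ.erase i0, C (γ i) * X i) with hβ
  set g : Fin (n + 1) → MvPolynomial (Fin (n + 1)) ℂ :=
    Function.update (fun i => (X i : MvPolynomial (Fin (n + 1)) ℂ)) i0 α with hg
  set f : Fin (n + 1) → MvPolynomial (Fin (n + 1)) ℂ :=
    Function.update (fun i => (X i : MvPolynomial (Fin (n + 1)) ℂ)) i0 β with hf
  set ψ : MvPolynomial (Fin (n + 1)) ℂ →ₐ[ℂ] MvPolynomial (Fin (n + 1)) ℂ := aeval g with hψ
  set φ : MvPolynomial (Fin (n + 1)) ℂ →ₐ[ℂ] MvPolynomial (Fin (n + 1)) ℂ := aeval f with hφ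
  have hgi0 : g i0 = α := Function.update_self _ _ _
  have hgi : ∀ i, i ≠ i0 → g i = X i := fun i hi => Function.update_of_ne hi _ _
  have hfi0 : f i0 = β := Function.update_self _ _ _
  have hfi : ∀ i, i ≠ i0 → f i = X i := fun i hi => Function.update_of_ne hi _ _
  have hsplit : α = C (γ i0) * X i0 + ∑ i ∈ Finset.univ.erase i0, C (γ i) * X i := by
    rw [hα, ← Finset.add_sum_erase _ _ (Finset.mem_univ i0)]
  have hCinv : (C (γ i0)⁻¹ : MvPolynomial (Fin (n + 1)) ℂ) * C (γ i0) = 1 := by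
    rw [← C_mul, inv_mul_cancel₀ h0, C_1]
  have hψC : ∀ x : ℂ, ψ (C x) = C x := by
    intro x
    rw [← MvPolynomial.algebraMap_eq]; exact ψ.commutes _
  have hφC : ∀ x : ℂ, φ (C x) = C x := by
    intro x
    rw [← MvPolynomial.algebraMap_eq]; exact φ.commutes _
  have hψβ : ψ β = X i0 := by
    rw [hβ]
    rw [map_mul, map_sub, map_sum]
    have h2 : ψ (X i0) = α := by rw [hψ, aeval_X, hgi0]
    have h3 : ∀ i ∈ Finset.univ.erase i0, ψ (C (γ i) * X i) = C (γ i) * X i := by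
      intro i hi
      have hi' : i ≠ i0 := Finset.ne_of_mem_erase hi
      rw [map_mul, hψC, hψ, aeval_X, hgi i hi']
    rw [hψC, h2, Finset.sum_congr rfl h3, hsplit, add_sub_cancel_right, ← mul_assoc, hCinv,
      one_mul]
  have hφα : φ α = X i0 := by
    rw [hα, map_sum]
    have h3 : ∀ i, φ (C (γ i) * X i) = C (γ i) * f i := by
      intro i
      rw [map_mul, hφC, hφ, aeval_X]
    rw [Finset.sum_congr rfl (fun i _ => h3 i)]
    rw [← Finset.add_sum_erase _ _ (Finset.mem_univ i0), hfi0]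
    have h4 : ∑ i ∈ Finset.univ.erase i0, C (γ i) * f i
        = ∑ i ∈ Finset.univ.erase i0, C (γ i) * X i := by
      apply Finset.sum_congr rfl
      intro i hi
      rw [hfi i (Finset.ne_of_mem_erase hi)]
    rw [h4, hβ, ← mul_assoc, ← C_mul, mul_inv_cancel₀ h0, C_1, one_mul]
    ring
  have hcomp1 : ψ.comp φ = AlgHom.id ℂ _ := by
    apply MvPolynomial.algHom_ext
    intro i
    rcases eq_or_ne i i0 with rfl | hi
    · rw [AlgHom.comp_apply, AlgHom.id_apply, hφ, aeval_X, hfi0]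
      exact hψβ
    · rw [AlgHom.comp_apply, AlgHom.id_apply, hφ, aeval_X, hfi i hi, hψ, aeval_X, hgi i hi]
  have hcomp2 : φ.comp ψ = AlgHom.id ℂ _ := by
    apply MvPolynomial.algHom_ext
    intro i
    rcases eq_or_ne i i0 with rfl | hi
    · rw [AlgHom.comp_apply, AlgHom.id_apply, hψ, aeval_X, hgi0]
      exact hφα
    · rw [AlgHom.comp_apply, AlgHom.id_apply, hψ, aeval_X, hgi i hi, hφ, aeval_X, hfi i hi]
  refine ⟨AlgEquiv.ofAlgHom ψ φ hcomp1 hcomp2, ?_, ?_, ?_⟩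
  · show ψ (X i0) = α
    rw [hψ, aeval_X, hgi0]
  · have hsymm : (AlgEquiv.ofAlgHom ψ φ hcomp1 hcomp2).symm (X i0) = β := by
      rw [AlgEquiv.symm_apply_eq]
      show (X i0 : MvPolynomial (Fin (n + 1)) ℂ) = ψ β
      exact hψβ.symm
    rw [hsymm, hβ]
    have h1 : ((X i0 : MvPolynomial (Fin (n + 1)) ℂ) -
        ∑ i ∈ Finset.univ.erase i0, C (γ i) * X i).IsHomogeneous 1 := by
      rw [← mem_homogeneousSubmodule]
      apply Submodule.sub_mem
      · exact (mem_homogeneousSubmodule _ _).2 (isHomogeneous_X ℂ i0)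
      · exact (mem_homogeneousSubmodule _ _).2 (homog_linear_comb _ γ)
    simpa using (isHomogeneous_C _ ((γ i0)⁻¹)).mul h1
  · intro i hi
    rw [AlgEquiv.symm_apply_eq]
    show (X i : MvPolynomial (Fin (n + 1)) ℂ) = ψ (X i)
    rw [hψ, aeval_X, hgi i hi]

theorem exists_coeff_ne_zero {n : ℕ} {p : MvPolynomial (Fin (n + 1)) ℂ}
    (hp : IsLinearForm n p) : ∃ i0, p.coeff (Finsupp.single i0 1) ≠ 0 := by
  by_contra h
  push_neg at h
  apply hp.1
  rw [linear_structure p hp.2]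
  apply Finset.sum_eq_zero
  intro i _
  rw [h i, C_0, zero_mul]

theorem linear_form_prime {n : ℕ} {p : MvPolynomial (Fin (n + 1)) ℂ}
    (hp : IsLinearForm n p) : Prime p := by
  obtain ⟨i0, hγ⟩ := exists_coeff_ne_zero hp
  obtain ⟨e, he1, -, -⟩ := exists_linear_aut (fun i => p.coeff (Finsupp.single i 1)) i0 hγ
  have hep : e (X i0) = p := by rw [he1, ← linear_structure p hp.2]
  rw [← hep]
  exact (MulEquiv.prime_iff e.toMulEquiv).mpr (prime_X_mv i0)

theorem linear_dvd_linear {n : ℕ} {p q : MvPolynomial (Fin (n + 1)) ℂ}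
    (hp : IsLinearForm n p) (hq : q.IsHomogeneous 1) (hdvd : p ∣ q) :
    ∃ t : ℂ, q = C t * p := by
  classical
  obtain ⟨i0, hγ⟩ := exists_coeff_ne_zero hp
  obtain ⟨e, he1, hesymmhom, hesymm⟩ :=
    exists_linear_aut (fun i => p.coeff (Finsupp.single i 1)) i0 hγ
  have hep : e (X i0) = p := by rw [he1, ← linear_structure p hp.2]
  have hsymmp : e.symm p = X i0 := by rw [← hep, AlgEquiv.symm_apply_apply]
  have heC : ∀ x : ℂ, e.symm (C x) = C x := fun x => by
    rw [← MvPolynomial.algebraMap_eq]; exact e.symm.commutes x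
  have hℓhom : (e.symm q).IsHomogeneous 1 := by
    conv_lhs => rw [linear_structure q hq]
    rw [map_sum]
    apply MvPolynomial.IsHomogeneous.sum
    intro i _
    rw [map_mul, heC]
    rcases eq_or_ne i i0 with rfl | hi
    · simpa using (isHomogeneous_C _ (q.coeff (Finsupp.single i 1))).mul hesymmhom
    · rw [hesymm i hi]
      simpa using (isHomogeneous_C _ (q.coeff (Finsupp.single i 1))).mul (isHomogeneous_X ℂ i)
  have hXdvd : (X i0 : MvPolynomial (Fin (n + 1)) ℂ) ∣ e.symm q := by
    obtain ⟨w, hw⟩ := hdvd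
    refine ⟨e.symm w, ?_⟩
    rw [hw, map_mul, hsymmp]
  have hδ : ∀ r, r ≠ i0 → (e.symm q).coeff (Finsupp.single r 1) = 0 := by
    intro r hr
    obtain ⟨w, hw⟩ := hXdvd
    rw [hw, mul_comm, coeff_mul_X', if_neg]
    rw [Finsupp.support_single_ne_zero _ one_ne_zero]
    simp [Ne.symm hr]
  have hℓeq : e.symm q = C ((e.symm q).coeff (Finsupp.single i0 1)) * X i0 := by
    conv_lhs => rw [linear_structure (e.symm q) hℓhom]
    rw [Finset.sum_eq_single i0]
    · intro r _ hr
      rw [hδ r hr, C_0, zero_mul]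
    · simp
  refine ⟨(e.symm q).coeff (Finsupp.single i0 1), ?_⟩
  have hq2 : q = e (e.symm q) := by rw [AlgEquiv.apply_symm_apply]
  conv_lhs => rw [hq2, hℓeq]
  rw [map_mul, hep]
  congr 1
  rw [← MvPolynomial.algebraMap_eq]
  exact e.commutes _

/-- Q^{n-1} divides the Jacobian determinant D = det(∂ⱼaᵢ) of the coefficients of
ω = (Q/Q̃)(F dG - G dF). -/
theorem radical_power_divides_jacobian
    (n d k u : ℕ) (hn : 1 ≤ n) (hd : 1 ≤ d) (hk : 2 ≤ k)
    (F G : MvPolynomial (Fin (n + 1)) ℂ)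
    (hF : F.IsHomogeneous d) (hG : G.IsHomogeneous d)
    (hFcr : CompletelyReducible n F) (hGcr : CompletelyReducible n G)
    (hcop : RelPrime n F G)
    (c : Fin k → ℂ × ℂ)
    (hprop : ∀ i j, i ≠ j → (c i).1 * (c j).2 ≠ (c i).2 * (c j).1)
    (P : Fin k → MvPolynomial (Fin (n + 1)) ℂ)
    (hP : ∀ i, P i = C (c i).1 * F + C (c i).2 * G)
    (hP0 : P ⟨0, by omega⟩ = F) (hP1 : P ⟨1, by omega⟩ = G)
    (hPcr : ∀ i, CompletelyReducible n (P i))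
    (α : Fin u → MvPolynomial (Fin (n + 1)) ℂ)
    (hα : ∀ i, IsLinearForm n (α i))
    (hαprop : ∀ i j, i ≠ j → ∀ t : ℂ, α i ≠ C t * α j)
    (m : Fin u → ℕ) (hm : ∀ i, 1 ≤ m i)
    (hQt : ∏ i, P i = ∏ i, α i ^ m i)
    (a : Fin (n + 1) → MvPolynomial (Fin (n + 1)) ℂ)
    (ha : ∀ i, a i * ∏ j, α j ^ (m j - 1) = F * pderiv i G - G * pderiv i F) :
    (∏ i, α i) ^ (n - 1) ∣ (Matrix.of fun i j => pderiv j (a i)).det := by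
  classical
  have hαprime : ∀ i, Prime (α i) := fun i => linear_form_prime (hα i)
  have hαnd : ∀ i j, i ≠ j → ¬ α i ∣ α j := by
    intro i j hij hdvd
    obtain ⟨t, ht⟩ := linear_dvd_linear (hα i) (hα j).2 hdvd
    exact hαprop j i (Ne.symm hij) t ht
  have hCunit : ∀ x : ℂ, x ≠ 0 → IsUnit (C x : MvPolynomial (Fin (n + 1)) ℂ) := by
    intro x hx
    exact IsUnit.of_mul_eq_one (C x⁻¹) (by rw [← C_mul, mul_inv_cancel₀ hx, C_1])
  have key : ∀ l : Fin u, (α l) ^ (n - 1) ∣ (Matrix.of fun i j => pderiv j (a i)).det := by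
    intro l
    set A := α l with hAdef
    have hA : Prime A := hαprime l
    have hAhom : A.IsHomogeneous 1 := (hα l).2
    set γA : Fin (n + 1) → ℂ := fun i => A.coeff (Finsupp.single i 1) with hγA
    have hpdA : ∀ i, pderiv i A = C (γA i) := fun i => pderiv_linear A hAhom i
    obtain ⟨i0, hγ0⟩ := exists_coeff_ne_zero (hα l)
    -- Step 1: choose the member divisible by A
    have hAdvdQ : A ∣ ∏ i, P i := by
      rw [hQt]
      exact dvd_trans (dvd_pow_self (α l) (Nat.one_le_iff_ne_zero.1 (hm l)))
        (Finset.dvd_prod_of_mem _ (Finset.mem_univ l))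
    obtain ⟨s, -, hAs⟩ := hA.exists_mem_finset_dvd hAdvdQ
    obtain ⟨t, hts⟩ := Fintype.exists_ne_of_one_lt_card (by simpa using (show 1 < k by omega)) s
    -- Step 2: A divides no other member
    have hAnotP : ∀ t', t' ≠ s → ¬ A ∣ P t' := by
      intro t' ht' hdvd
      have hδ' : (c s).1 * (c t').2 - (c s).2 * (c t').1 ≠ 0 :=
        sub_ne_zero.2 (hprop s t' (Ne.symm ht'))
      have hFc : C ((c s).1 * (c t').2 - (c s).2 * (c t').1) * F
          = C ((c t').2) * P s - C ((c s).2) * P t' := by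
        rw [hP s, hP t', map_sub, map_mul, map_mul]; ring
      have hGc : C ((c s).1 * (c t').2 - (c s).2 * (c t').1) * G
          = C ((c s).1) * P t' - C ((c t').1) * P s := by
        rw [hP s, hP t', map_sub, map_mul, map_mul]; ring
      have hdF : A ∣ C ((c s).1 * (c t').2 - (c s).2 * (c t').1) * F := by
        rw [hFc]; exact dvd_sub (Dvd.dvd.mul_left hAs _) (Dvd.dvd.mul_left hdvd _)
      have hdG : A ∣ C ((c s).1 * (c t').2 - (c s).2 * (c t').1) * G := by
        rw [hGc]; exact dvd_sub (Dvd.dvd.mul_left hdvd _) (Dvd.dvd.mul_left hAs _)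
      have hF2 : F = C (((c s).1 * (c t').2 - (c s).2 * (c t').1)⁻¹) *
          (C ((c s).1 * (c t').2 - (c s).2 * (c t').1) * F) := by
        rw [← mul_assoc, ← C_mul, inv_mul_cancel₀ hδ', C_1, one_mul]
      have hG2 : G = C (((c s).1 * (c t').2 - (c s).2 * (c t').1)⁻¹) *
          (C ((c s).1 * (c t').2 - (c s).2 * (c t').1) * G) := by
        rw [← mul_assoc, ← C_mul, inv_mul_cancel₀ hδ', C_1, one_mul]
      have huF : A ∣ F := by rw [hF2]; exact Dvd.dvd.mul_left hdF _
      have huG : A ∣ G := by rw [hG2]; exact Dvd.dvd.mul_left hdG _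
      exact hA.not_unit (hcop A huF huG)
    -- Step 3: A ^ (m l) divides P s
    have hprodsplit : ∏ i, P i = P s * ∏ i ∈ Finset.univ.erase s, P i :=
      (Finset.mul_prod_erase _ _ (Finset.mem_univ s)).symm
    have hnd2 : ¬ A ∣ ∏ i ∈ Finset.univ.erase s, P i := by
      intro hd
      obtain ⟨j, hj, hdj⟩ := hA.exists_mem_finset_dvd hd
      exact hAnotP j (Finset.ne_of_mem_erase hj) hdj
    have hAmQ : A ^ (m l) ∣ ∏ i, P i := by
      rw [hQt]; exact Finset.dvd_prod_of_mem _ (Finset.mem_univ l)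
    have hAm : A ^ (m l) ∣ P s :=
      hA.pow_dvd_of_dvd_mul_right (m l) hnd2 (by rw [← hprodsplit]; exact hAmQ)
    obtain ⟨S, hS⟩ := hAm
    -- Step 4: split off A from the product of powers
    set W' := ∏ j ∈ Finset.univ.erase l, α j ^ (m j - 1) with hW'def
    have hWsplit : ∏ j, α j ^ (m j - 1) = A ^ (m l - 1) * W' :=
      (Finset.mul_prod_erase _ _ (Finset.mem_univ l)).symm
    have hAW' : ¬ A ∣ W' := by
      intro hd
      obtain ⟨j, hj, hdj⟩ := hA.exists_mem_finset_dvd hd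
      exact hαnd l j (Ne.symm (Finset.ne_of_mem_erase hj)) (hA.dvd_of_dvd_pow hdj)
    -- Step 5: pencil identity
    set δ := (c s).1 * (c t).2 - (c s).2 * (c t).1 with hδdef
    have hδ : δ ≠ 0 := sub_ne_zero.2 (hprop s t (Ne.symm hts))
    have hkey : ∀ i, C δ * (F * pderiv i G - G * pderiv i F)
        = P s * pderiv i (P t) - P t * pderiv i (P s) := by
      intro i
      rw [hδdef, hP s, hP t, map_sub, map_mul, map_mul]
      simp only [map_add, pderiv_C_mul]
      ring
    have hMM : A ^ (m l) = A ^ (m l - 1) * A := by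
      conv_lhs => rw [show m l = m l - 1 + 1 from (Nat.succ_pred_eq_of_pos (hm l)).symm]
      rw [pow_succ]
    -- Step 6: the fundamental congruence for the coefficients a i
    have eq1 : ∀ i, C δ * (a i * W') =
        A * (S * pderiv i (P t) - P t * pderiv i S) +
          (-((m l : MvPolynomial (Fin (n + 1)) ℂ) * P t * S)) * C (γA i) := by
      intro i
      have h2 := hkey i
      rw [← ha i, hWsplit, hS] at h2
      rw [pderiv_mul (f := A ^ (m l)) (g := S), pderiv_pow, hpdA i] at h2
      simp only [hMM] at h2
      have h3 : A ^ (m l - 1) * (C δ * (a i * W')) =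
          A ^ (m l - 1) * (A * (S * pderiv i (P t) - P t * pderiv i S) +
            (-((m l : MvPolynomial (Fin (n + 1)) ℂ) * P t * S)) * C (γA i)) := by
        linear_combination h2
      exact mul_left_cancel₀ (pow_ne_zero (m l - 1) hA.ne_zero) h3
    -- Step 7: extract the multiples of A
    have hsubdvd : ∀ i, A ∣ (C (γA i0) * a i - C (γA i) * a i0) := by
      intro i
      have hcomb : (C δ * W') * (C (γA i0) * a i - C (γA i) * a i0)
          = A * (C (γA i0) * (S * pderiv i (P t) - P t * pderiv i S)
              - C (γA i) * (S * pderiv i0 (P t) - P t * pderiv i0 S)) := by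
        linear_combination C (γA i0) * eq1 i - C (γA i) * eq1 i0
      have hAd : A ∣ (C δ * W') * (C (γA i0) * a i - C (γA i) * a i0) := by
        rw [hcomb]; exact dvd_mul_right _ _
      rcases hA.dvd_or_dvd hAd with h | h
      · rcases hA.dvd_or_dvd h with h' | h'
        · exact absurd (isUnit_of_dvd_unit h' (hCunit δ hδ)) hA.not_unit
        · exact absurd h' hAW'
      · exact h
    choose b' hb' using hsubdvd
    have hCinv : C ((γA i0)⁻¹) * C (γA i0) = (1 : MvPolynomial (Fin (n + 1)) ℂ) := by
      rw [← C_mul, inv_mul_cancel₀ hγ0, C_1]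
    have hai : ∀ i, a i = (C ((γA i0)⁻¹) * C (γA i)) * a i0 + A * (C ((γA i0)⁻¹) * b' i) := by
      intro i
      have h := hb' i
      calc a i = (C ((γA i0)⁻¹) * C (γA i0)) * a i := by rw [hCinv, one_mul]
        _ = _ := by linear_combination C ((γA i0)⁻¹) * h
    -- Step 8: the rows of the Jacobian matrix
    have hentry : ∀ i j, pderiv j (a i) =
        (C ((γA i0)⁻¹) * C (γA i)) * pderiv j (a i0)
          + (C ((γA i0)⁻¹) * b' i) * C (γA j)
          + A * pderiv j (C ((γA i0)⁻¹) * b' i) := by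
      intro i j
      conv_lhs => rw [hai i]
      have e1 : pderiv j ((C ((γA i0)⁻¹) * C (γA i)) * a i0)
          = (C ((γA i0)⁻¹) * C (γA i)) * pderiv j (a i0) := by
        rw [← C_mul, pderiv_C_mul, C_mul]
      have e2 : pderiv j (A * (C ((γA i0)⁻¹) * b' i))
          = C (γA j) * (C ((γA i0)⁻¹) * b' i) + A * pderiv j (C ((γA i0)⁻¹) * b' i) := by
        rw [pderiv_mul, hpdA j]
      rw [map_add, e1, e2]
      ring
    have hmat : (Matrix.of fun i j => pderiv j (a i))
        = Matrix.of fun i j => (C ((γA i0)⁻¹) * C (γA i)) * pderiv j (a i0)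
            + (C ((γA i0)⁻¹) * b' i) * C (γA j)
            + A * pderiv j (C ((γA i0)⁻¹) * b' i) := by
      exact Matrix.ext fun i j => hentry i j
    rw [hmat]
    have hdet := det_aux (fun i => C ((γA i0)⁻¹) * C (γA i)) (fun j => pderiv j (a i0))
      (fun i => C ((γA i0)⁻¹) * b' i) (fun j => C (γA j)) A
      (fun i j => pderiv j (C ((γA i0)⁻¹) * b' i))
    have hexp : n + 1 - 2 = n - 1 := by omega
    rw [hexp] at hdet
    exact hdet
  rw [← Finset.prod_pow]
  exact prod_pow_dvd_aux Finset.univ α (fun i _ => hαprime i)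
    (fun i _ j _ hij => hαnd i j hij) (n - 1) _ (fun l _ => key l)
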